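/- In the extended rock-throwing model M with epistemic state ({(M,u₁), (M,u₂), (M,u₃), (M,u₄)}, Pr) where Pr assigns probability 1/4 to each situation, and where u₁ has b₀ = 1 and BT = 1 (the bottle is already shattered), u₂ has b₀ = 0 and BT = 2 (Billy throws extra hard, so both rocks hit simultaneously), u₃ has b₀ = 0 and BT = 1 (Suzy's rock hits first), and u₄ has b₀ = 0 and BT = 0 (Billy does not throw): the degrees of responsibility of ST = 1 for BS = 1 in (M_{ST←1}, u₁), (M_{ST←1}, u₂), (M_{ST←1}, u₃), (M_{ST←1}, u₄) are 0, 1/2, 1, and 1 respectively, and hence the degree of blame of setting ST to 1 for BS = 1 relative to this epistemic state is 5/8. -/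

import Mathlib

open Classical

/-- A causal model over exogenous variables `U` and endogenous variables `V`,
with integer-valued variables.  `Rexo Y` / `R X` are the (intended) ranges of
the variables, and `F X` is the structural equation for the endogenous
variable `X`, giving its value as a function of the values of all other
variables. -/
structure CausalModel (U V : Type) where
  Rexo : U → Set ℤ
  R : V → Set ℤ
  F : V → (U → ℤ) → (V → ℤ) → ℤ

namespace CausalModel

variable {U V : Type}

/-- A causal model is recursive if the variables can be ordered so that each
structural equation depends only on the values of strictly earlier endogenous
variables (equivalently, the dependency graph is acyclic). -/
def Recursive (M : CausalModel U V) : Prop :=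
  ∃ ord : V → ℕ, ∀ (X : V) (u : U → ℤ) (g g' : V → ℤ),
    (∀ Y, ord Y < ord X → g Y = g' Y) → M.F X u g = M.F X u g'

/-- `s` simultaneously satisfies all the structural equations in context `u`. -/
def IsSolution (M : CausalModel U V) (u : U → ℤ) (s : V → ℤ) : Prop :=
  ∀ X, s X = M.F X u s

/-- The (unique, for recursive models) solution of the equations in context `u`. -/
noncomputable def solution (M : CausalModel U V) (u : U → ℤ) : V → ℤ :=
  Classical.epsilon fun s => M.IsSolution u s

/-- The model `M_{A ← y}` obtained by replacing the equations of the variables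
in `A` by the constant values given by `y`. -/
noncomputable def intervene (M : CausalModel U V) (A : Set V) (y : V → ℤ) :
    CausalModel U V where
  Rexo := M.Rexo
  R := M.R
  F := fun X u g => if X ∈ A then y X else M.F X u g

end CausalModel

/-- Boolean combinations of primitive events `X = x`. -/
inductive CausalFormula (V : Type) where
  | tru : CausalFormula V
  | eq : V → ℤ → CausalFormula V
  | not : CausalFormula V → CausalFormula V
  | and : CausalFormula V → CausalFormula V → CausalFormula V
  | or : CausalFormula V → CausalFormula V → CausalFormula V
  | iff : CausalFormula V → CausalFormula V → CausalFormula V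

/-- Truth of a causal formula under an assignment to the endogenous variables. -/
def CausalFormula.holds {V : Type} (s : V → ℤ) : CausalFormula V → Prop
  | tru => True
  | eq X x => s X = x
  | not φ => ¬ φ.holds s
  | and φ χ => φ.holds s ∧ χ.holds s
  | or φ χ => φ.holds s ∨ χ.holds s
  | iff φ χ => φ.holds s ↔ χ.holds s

/-- `(M,u) ⊨ [A ← y] φ` : `φ` holds in the unique solution of `M_{A ← y}` in
context `u`. -/
def sat {U V : Type} (M : CausalModel U V) (u : U → ℤ) (A : Set V) (y : V → ℤ)
    (φ : CausalFormula V) : Prop :=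
  φ.holds ((M.intervene A y).solution u)

/-- Condition AC2 of the Halpern–Pearl definition of causality, for the single
conjunct `X = x`, witnessed by the partition `(Wᶜ, W)` (so `Z = Wᶜ ∋ X`) and
the setting `(x', w')` of `(X, W)`. -/
def AC2 {U V : Type} (M : CausalModel U V) (u : U → ℤ) (X : V) (x : ℤ)
    (φ : CausalFormula V) (W : Set V) (x' : ℤ) (w' : V → ℤ) : Prop :=
  X ∉ W ∧ x' ∈ M.R X ∧ (∀ Y ∈ W, w' Y ∈ M.R Y) ∧
  -- AC2(a): (M,u) ⊨ [X ← x', W ← w'] ¬φ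
  ¬ sat M u (insert X W) (fun Y => if Y = X then x' else w' Y) φ ∧
  -- AC2(b): (M,u) ⊨ [X ← x, W ← w', Z' ← z*] φ for all subsets Z' of Z = Wᶜ
  ∀ Z' : Set V, Z' ⊆ Wᶜ →
    sat M u (insert X (W ∪ Z'))
      (fun Y => if Y = X then x else if Y ∈ W then w' Y else M.solution u Y) φ

/-- `X = x` is a cause of `φ` in `(M,u)`: AC1 together with AC2 (AC3 is
automatic for single conjuncts). -/
def IsCause {U V : Type} (M : CausalModel U V) (u : U → ℤ) (X : V) (x : ℤ)
    (φ : CausalFormula V) : Prop :=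
  (M.solution u X = x ∧ φ.holds (M.solution u)) ∧
  ∃ W x' w', AC2 M u X x φ W x' w'

/-- The degree of responsibility of `X = x` for `φ` in `(M,u)` : `0` if
`X = x` is not a cause of `φ`, and otherwise `1/(k+1)` where `k` is the
minimal, over all AC2 witnesses, number of variables of `W` whose value in
`w'` differs from their value in the unique solution of `(M,u)`. -/
noncomputable def dr {U V : Type} (M : CausalModel U V) (u : U → ℤ) (X : V)
    (x : ℤ) (φ : CausalFormula V) : ℚ :=
  if IsCause M u X x φ then
    1 / ((sInf {k : ℕ | ∃ W x' w', AC2 M u X x φ W x' w' ∧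
        {Y | Y ∈ W ∧ w' Y ≠ M.solution u Y}.ncard = k} : ℕ) + 1 : ℚ)
  else 0

/-- The degree of blame of setting `X` to `x` for `φ`, relative to the
epistemic state given by the (indexed) finite set of situations
`(Mod i, ctx i)` with probabilities `Pr i` : the expected degree of
responsibility of `X = x` for `φ` in the situations `((Mod i)_{X ← x}, ctx i)`. -/
noncomputable def db {U V ι : Type} [Fintype ι] (Mod : ι → CausalModel U V)
    (ctx : ι → U → ℤ) (Pr : ι → ℚ) (X : V) (x : ℤ) (φ : CausalFormula V) : ℚ :=
  ∑ i, dr ((Mod i).intervene {X} (fun _ => x)) (ctx i) X x φ * Pr i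

/-- Variables of the extended rock-throwing model. -/
inductive ERockVar : Type where
  | ST : ERockVar
  | BT : ERockVar
  | SH : ERockVar
  | BH : ERockVar
  | BS : ERockVar
deriving DecidableEq

/-- The extended rock-throwing model.  The exogenous context determines
`b₀ = u 0 ∈ {0,1}` (whether the bottle is already shattered), Billy's throw
`u 1 ∈ {0,1,2}` and Suzy's throw `u 2 ∈ {0,1}` (equal to `0` in all four
contexts).  `ST` and `BT` copy the exogenous values, `SH = ST`, `BH = 1` iff
`BT = 2` or (`BT = 1` and `SH = 0`), and `BS = 1` iff `b₀ = 1` or `SH = 1` or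
`BH = 1`. -/
def extRock : CausalModel (Fin 3) ERockVar where
  Rexo := ![({0, 1} : Set ℤ), {0, 1, 2}, {0, 1}]
  R := fun X =>
    match X with
    | .BT => {0, 1, 2}
    | _ => {0, 1}
  F := fun X u g =>
    match X with
    | .ST => u 2
    | .BT => u 1
    | .SH => g .ST
    | .BH => if g .BT = 2 ∨ (g .BT = 1 ∧ g .SH = 0) then 1 else 0
    | .BS => if u 0 = 1 ∨ g .SH = 1 ∨ g .BH = 1 then 1 else 0


section Helpers

open CausalModel ERockVar

instance : Fintype ERockVar :=
  ⟨⟨{.ST, .BT, .SH, .BH, .BS}, by decide⟩, fun x => by cases x <;> decide⟩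

lemma intervene_intervene {U V : Type} (M : CausalModel U V) (A B : Set V)
    (y z : V → ℤ) :
    (M.intervene A y).intervene B z
      = M.intervene (A ∪ B) (fun X => if X ∈ B then z X else y X) := by
  unfold CausalModel.intervene
  simp only [CausalModel.mk.injEq, true_and]
  funext X u g
  by_cases hB : X ∈ B <;> by_cases hA : X ∈ A <;> simp [hA, hB]

/-- Explicit solution of the (intervened) extended rock-throwing model. -/
noncomputable def esol (A : Set ERockVar) (y : ERockVar → ℤ) (u : Fin 3 → ℤ) :
    ERockVar → ℤ := fun X =>
  match X with
  | .ST => if ERockVar.ST ∈ A then y .ST else u 2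
  | .BT => if ERockVar.BT ∈ A then y .BT else u 1
  | .SH => if ERockVar.SH ∈ A then y .SH else
      (if ERockVar.ST ∈ A then y .ST else u 2)
  | .BH => if ERockVar.BH ∈ A then y .BH else
      (if (if ERockVar.BT ∈ A then y .BT else u 1) = 2 ∨
          ((if ERockVar.BT ∈ A then y .BT else u 1) = 1 ∧
            (if ERockVar.SH ∈ A then y .SH else
              (if ERockVar.ST ∈ A then y .ST else u 2)) = 0) then 1 else 0)
  | .BS => if ERockVar.BS ∈ A then y .BS else
      (if u 0 = 1 ∨
          (if ERockVar.SH ∈ A then y .SH else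
            (if ERockVar.ST ∈ A then y .ST else u 2)) = 1 ∨
          (if ERockVar.BH ∈ A then y .BH else
            (if (if ERockVar.BT ∈ A then y .BT else u 1) = 2 ∨
                ((if ERockVar.BT ∈ A then y .BT else u 1) = 1 ∧
                  (if ERockVar.SH ∈ A then y .SH else
                    (if ERockVar.ST ∈ A then y .ST else u 2)) = 0) then 1 else 0)) = 1
        then 1 else 0)

lemma esol_isSolution (A : Set ERockVar) (y : ERockVar → ℤ) (u : Fin 3 → ℤ) :
    (extRock.intervene A y).IsSolution u (esol A y u) := by
  intro X
  cases X <;>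
    simp only [CausalModel.intervene, extRock, esol, CausalModel.IsSolution] <;> congr

lemma esol_unique (A : Set ERockVar) (y : ERockVar → ℤ) (u : Fin 3 → ℤ)
    (t : ERockVar → ℤ) (ht : (extRock.intervene A y).IsSolution u t) :
    t = esol A y u := by
  have hST := ht .ST
  have hBT := ht .BT
  have hSH := ht .SH
  have hBH := ht .BH
  have hBS := ht .BS
  simp only [CausalModel.intervene, extRock] at hST hBT hSH hBH hBS
  rw [hST] at hSH
  rw [hBT, hSH] at hBH
  rw [hSH, hBH] at hBS
  funext X
  cases X <;> simp only [esol, hST, hBT, hSH, hBH, hBS]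

lemma solution_intervene (A : Set ERockVar) (y : ERockVar → ℤ) (u : Fin 3 → ℤ) :
    (extRock.intervene A y).solution u = esol A y u := by
  have hex : ∃ s, (extRock.intervene A y).IsSolution u s :=
    ⟨_, esol_isSolution A y u⟩
  exact esol_unique A y u _ (Classical.epsilon_spec hex)

lemma sat_iff (A₁ A : Set ERockVar) (y₁ y : ERockVar → ℤ) (u : Fin 3 → ℤ)
    (φ : CausalFormula ERockVar) :
    sat (extRock.intervene A₁ y₁) u A y φ ↔
      φ.holds (esol (A₁ ∪ A) (fun X => if X ∈ A then y X else y₁ X) u) := by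
  rw [sat, intervene_intervene, solution_intervene]

end Helpers


section Main

open CausalModel ERockVar

noncomputable abbrev M0 : CausalModel (Fin 3) ERockVar :=
  extRock.intervene {ERockVar.ST} fun _ => 1

abbrev phi0 : CausalFormula ERockVar := CausalFormula.eq ERockVar.BS 1

lemma base_sol (u : Fin 3 → ℤ) :
    M0.solution u = fun X => match X with
      | .ST => 1 | .BT => u 1 | .SH => 1
      | .BH => if u 1 = 2 then 1 else 0 | .BS => 1 := by
  rw [solution_intervene]
  funext X
  cases X <;> simp [esol]

lemma ranges (Y : ERockVar) : M0.R Y = extRock.R Y := rfl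


lemma holds_eq (s : ERockVar → ℤ) : (phi0).holds s ↔ s ERockVar.BS = 1 := Iff.rfl

lemma dr4 : dr M0 ![0, 0, 0] ERockVar.ST 1 phi0 = 1 := by
  have hAC2 : AC2 M0 ![0,0,0] ERockVar.ST 1 phi0 ∅ 0 (fun _ => 0) := by
    refine ⟨by simp, by norm_num [CausalModel.intervene, extRock], by simp, ?_, ?_⟩
    · rw [sat_iff, holds_eq]
      simp [esol]
    · intro Z' _
      rw [sat_iff, holds_eq, base_sol]
      by_cases hBS : ERockVar.BS ∈ Z' <;>
        by_cases hSH : ERockVar.SH ∈ Z' <;>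
          simp [esol, hBS, hSH]
  have hcause : IsCause M0 ![0,0,0] ERockVar.ST 1 phi0 := by
    exact ⟨⟨by rw [base_sol], by rw [holds_eq, base_sol]⟩, ∅, 0, fun _ => 0, hAC2⟩
  have h0 : (0:ℕ) ∈ {k : ℕ | ∃ W x' w', AC2 M0 ![0,0,0] ERockVar.ST 1 phi0 W x' w' ∧
      {Y | Y ∈ W ∧ w' Y ≠ (M0).solution ![0,0,0] Y}.ncard = k} := by
    refine ⟨∅, 0, fun _ => 0, hAC2, ?_⟩
    simp
  rw [dr, if_pos hcause, Nat.sInf_eq_zero.mpr (Or.inl h0)]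
  norm_num


lemma dr3 : dr M0 ![0, 1, 0] ERockVar.ST 1 phi0 = 1 := by
  have hAC2 : AC2 M0 ![0,1,0] ERockVar.ST 1 phi0 {ERockVar.BH} 0 (fun _ => 0) := by
    refine ⟨by simp, by norm_num [CausalModel.intervene, extRock],
      fun Y _ => by cases Y <;> norm_num [CausalModel.intervene, extRock], ?_, ?_⟩
    · rw [sat_iff, holds_eq]
      simp [esol]
    · intro Z' _
      rw [sat_iff, holds_eq, base_sol]
      by_cases hBS : ERockVar.BS ∈ Z' <;>
        by_cases hSH : ERockVar.SH ∈ Z' <;>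
          simp [esol, hBS, hSH]
  have hcause : IsCause M0 ![0,1,0] ERockVar.ST 1 phi0 :=
    ⟨⟨by rw [base_sol], by rw [holds_eq, base_sol]⟩, _, _, _, hAC2⟩
  have h0 : (0:ℕ) ∈ {k : ℕ | ∃ W x' w', AC2 M0 ![0,1,0] ERockVar.ST 1 phi0 W x' w' ∧
      {Y | Y ∈ W ∧ w' Y ≠ (M0).solution ![0,1,0] Y}.ncard = k} := by
    refine ⟨{ERockVar.BH}, 0, fun _ => 0, hAC2, ?_⟩
    rw [base_sol]
    convert Set.ncard_empty ERockVar using 2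
    ext Y
    simp +contextual
  rw [dr, if_pos hcause, Nat.sInf_eq_zero.mpr (Or.inl h0)]
  norm_num


lemma dr2 : dr M0 ![0, 2, 0] ERockVar.ST 1 phi0 = 1 / 2 := by
  have hAC2 : AC2 M0 ![0,2,0] ERockVar.ST 1 phi0 {ERockVar.BH} 0 (fun _ => 0) := by
    refine ⟨by simp, by norm_num [CausalModel.intervene, extRock],
      fun Y _ => by cases Y <;> norm_num [CausalModel.intervene, extRock], ?_, ?_⟩
    · rw [sat_iff, holds_eq]
      simp [esol]
    · intro Z' _
      rw [sat_iff, holds_eq, base_sol]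
      by_cases hBS : ERockVar.BS ∈ Z' <;>
        by_cases hSH : ERockVar.SH ∈ Z' <;>
          simp [esol, hBS, hSH]
  have hcause : IsCause M0 ![0,2,0] ERockVar.ST 1 phi0 :=
    ⟨⟨by rw [base_sol], by rw [holds_eq, base_sol]⟩, _, _, _, hAC2⟩
  set S := {k : ℕ | ∃ W x' w', AC2 M0 ![0,2,0] ERockVar.ST 1 phi0 W x' w' ∧
      {Y | Y ∈ W ∧ w' Y ≠ (M0).solution ![0,2,0] Y}.ncard = k} with hS
  have h1 : (1:ℕ) ∈ S := by
    refine ⟨{ERockVar.BH}, 0, fun _ => 0, hAC2, ?_⟩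
    rw [base_sol]
    convert Set.ncard_singleton ERockVar.BH using 2
    ext Y
    constructor
    · rintro ⟨h, -⟩; exact h
    · rintro rfl; norm_num
  have h0 : (0:ℕ) ∉ S := by
    rintro ⟨W, x', w', ⟨hW, hx', hran, ha, hb⟩, hcard⟩
    rw [Set.ncard_eq_zero (Set.toFinite _)] at hcard
    have hval : ∀ Y ∈ W, w' Y = (M0).solution ![0,2,0] Y := by
      intro Y hY
      by_contra hne
      exact absurd hcard (Set.nonempty_iff_ne_empty.mp ⟨Y, hY, hne⟩)
    apply ha
    rw [sat_iff, holds_eq]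
    rw [base_sol] at hval
    by_cases hBS : ERockVar.BS ∈ W
    · have := hval _ hBS
      simp [esol, hBS, this]
    · by_cases hBH : ERockVar.BH ∈ W
      · have := hval _ hBH
        norm_num at this
        simp [esol, hBS, hBH, this]
      · by_cases hBT : ERockVar.BT ∈ W
        · have := hval _ hBT
          norm_num at this
          simp [esol, hBS, hBH, hBT, this]
        · simp [esol, hBS, hBH, hBT]
  have hsInf : sInf S = 1 := by
    refine le_antisymm (Nat.sInf_le h1) ?_
    rcases Nat.eq_zero_or_pos (sInf S) with h | h
    · rw [Nat.sInf_eq_zero] at h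
      rcases h with h | h
      · exact absurd h h0
      · rw [h] at h1; exact absurd h1 (Set.notMem_empty 1)
    · exact h
  rw [dr, if_pos hcause, ← hS, hsInf]
  norm_num


lemma dr1 : dr M0 ![1, 1, 0] ERockVar.ST 1 phi0 = 0 := by
  have hnc : ¬ IsCause M0 ![1,1,0] ERockVar.ST 1 phi0 := by
    rintro ⟨-, W, x', w', hW, hx', hran, ha, hb⟩
    have hb0 := hb ∅ (Set.empty_subset _)
    rw [sat_iff, holds_eq] at hb0
    apply ha
    rw [sat_iff, holds_eq]
    by_cases hBS : ERockVar.BS ∈ W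
    · simp [esol, hBS] at hb0
      simp [esol, hBS, hb0]
    · simp [esol, hBS]
  rw [dr, if_neg hnc]

end Main
/-- In the extended rock-throwing model, relative to the epistemic state
giving probability `1/4` to each of the contexts `u₁ = (b₀=1, BT=1)`,
`u₂ = (b₀=0, BT=2)`, `u₃ = (b₀=0, BT=1)`, `u₄ = (b₀=0, BT=0)`: the degrees of
responsibility of `ST = 1` for `BS = 1` in `(M_{ST←1}, uᵢ)` are `0`, `1/2`,
`1`, `1`, and the degree of blame of setting `ST` to `1` for `BS = 1` is
`5/8`. -/
theorem extRock_blame :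
    dr (extRock.intervene {ERockVar.ST} fun _ => 1) ![1, 1, 0]
        ERockVar.ST 1 (CausalFormula.eq ERockVar.BS 1) = 0 ∧
    dr (extRock.intervene {ERockVar.ST} fun _ => 1) ![0, 2, 0]
        ERockVar.ST 1 (CausalFormula.eq ERockVar.BS 1) = 1 / 2 ∧
    dr (extRock.intervene {ERockVar.ST} fun _ => 1) ![0, 1, 0]
        ERockVar.ST 1 (CausalFormula.eq ERockVar.BS 1) = 1 ∧
    dr (extRock.intervene {ERockVar.ST} fun _ => 1) ![0, 0, 0]
        ERockVar.ST 1 (CausalFormula.eq ERockVar.BS 1) = 1 ∧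
    db (fun _ : Fin 4 => extRock) ![![1, 1, 0], ![0, 2, 0], ![0, 1, 0], ![0, 0, 0]]
        (fun _ => 1 / 4) ERockVar.ST 1 (CausalFormula.eq ERockVar.BS 1)
      = 5 / 8 := by
  refine ⟨dr1, dr2, dr3, dr4, ?_⟩
  rw [db, Fin.sum_univ_four]
  simp only [Matrix.cons_val_zero, Matrix.cons_val_one, Matrix.head_cons,
    Matrix.cons_val_two, Matrix.tail_cons, Matrix.cons_val_three]
  rw [dr1, dr2, dr3, dr4]
  norm_num
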